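/- For any two full-support probability distributions μ ≠ π on 𝒴, the value of the optimization problem min_{(q_1,q_2)} ( D(q_1‖μ) + D(q_2‖π) ), where the minimum is over pairs of probability distributions q_1, q_2 on 𝒴 satisfying D(q_1‖μ) + D(q_2‖π) ≥ D(q_1‖π) + D(q_2‖μ), is equal to 2·B(μ, π). -/
import Mathlib


open Filter Finset Topology

noncomputable section

/-- `p` is a probability distribution on the finite alphabet. -/
def IsProb {𝓨 : Type} [Fintype 𝓨] (p : 𝓨 → ℝ) : Prop :=
  (∀ y, 0 ≤ p y) ∧ ∑ y, p y = 1

/-- `p` has full support. -/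
def FullSupport {𝓨 : Type} (p : 𝓨 → ℝ) : Prop := ∀ y, 0 < p y

/-- Relative entropy `D(q‖p)` (natural log, convention `0·log 0 = 0`,
which holds since `Real.log 0 = 0` in Mathlib). -/
def KL {𝓨 : Type} [Fintype 𝓨] (q p : 𝓨 → ℝ) : ℝ :=
  ∑ y, q y * Real.log (q y / p y)

/-- Bhattacharyya distance `B(p,q) = -log ∑ √(p y) √(q y)`. -/
def Bhat {𝓨 : Type} [Fintype 𝓨] (p q : 𝓨 → ℝ) : ℝ :=
  - Real.log (∑ y, Real.sqrt (p y) * Real.sqrt (q y))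

/-- Gibbs' inequality: relative entropy is nonnegative. -/
lemma gibbs {𝓨 : Type} [Fintype 𝓨] (q r : 𝓨 → ℝ) (hq : IsProb q)
    (hr : ∀ y, 0 < r y) (hr1 : ∑ y, r y = 1) :
    0 ≤ ∑ y, q y * Real.log (q y / r y) := by
  have key : ∑ y, q y * Real.log (r y / q y) ≤ 0 := by
    calc ∑ y, q y * Real.log (r y / q y) ≤ ∑ y, (r y - q y) := by
          apply Finset.sum_le_sum
          intro y _
          rcases eq_or_lt_of_le (hq.1 y) with h0 | hpos
          · rw [← h0]; simp [(hr y).le]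
          · have hrq : 0 < r y / q y := div_pos (hr y) hpos
            have hlog := Real.log_le_sub_one_of_pos hrq
            have h2 : q y * Real.log (r y / q y) ≤ q y * (r y / q y - 1) :=
              mul_le_mul_of_nonneg_left hlog hpos.le
            calc q y * Real.log (r y / q y) ≤ q y * (r y / q y - 1) := h2
              _ = r y - q y := by field_simp
      _ = 0 := by rw [Finset.sum_sub_distrib, hr1, hq.2]; ring
  have heq : ∀ y, q y * Real.log (q y / r y) = - (q y * Real.log (r y / q y)) := by
    intro y
    rcases eq_or_lt_of_le (hq.1 y) with h0 | hpos
    · rw [← h0]; ring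
    · rw [Real.log_div hpos.ne' (hr y).ne', Real.log_div (hr y).ne' hpos.ne']; ring
  rw [Finset.sum_congr rfl (fun y _ => heq y)]
  rw [Finset.sum_neg_distrib]
  linarith

/-- `min { D(q₁‖μ)+D(q₂‖π) : D(q₁‖μ)+D(q₂‖π) ≥ D(q₁‖π)+D(q₂‖μ) }
= 2·B(μ,π)`. -/
theorem statement5 (𝓨 : Type) [Fintype 𝓨] [Nonempty 𝓨]
    (μ π : 𝓨 → ℝ) (hμ : IsProb μ) (hπ : IsProb π)
    (hμf : FullSupport μ) (hπf : FullSupport π) (hne : μ ≠ π) :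
    IsLeast {x : ℝ | ∃ q₁ q₂ : 𝓨 → ℝ, IsProb q₁ ∧ IsProb q₂ ∧
        KL q₁ μ + KL q₂ π ≥ KL q₁ π + KL q₂ μ ∧
        x = KL q₁ μ + KL q₂ π}
      (2 * Bhat μ π) := by
  classical
  set Z : ℝ := ∑ y, Real.sqrt (μ y) * Real.sqrt (π y) with hZdef
  have hZpos : 0 < Z := by
    apply Finset.sum_pos
    · intro y _
      exact mul_pos (Real.sqrt_pos.2 (hμf y)) (Real.sqrt_pos.2 (hπf y))
    · exact Finset.univ_nonempty
  set r : 𝓨 → ℝ := fun y => Real.sqrt (μ y) * Real.sqrt (π y) / Z with hrdef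
  have hrpos : ∀ y, 0 < r y := fun y =>
    div_pos (mul_pos (Real.sqrt_pos.2 (hμf y)) (Real.sqrt_pos.2 (hπf y))) hZpos
  have hr1 : ∑ y, r y = 1 := by
    rw [hrdef, ← Finset.sum_div]
    exact div_self hZpos.ne'
  have hrprob : IsProb r := ⟨fun y => (hrpos y).le, hr1⟩
  have hBhat : Bhat μ π = - Real.log Z := rfl
  -- key identity
  have keyeq : ∀ q : 𝓨 → ℝ, IsProb q →
      KL q μ + KL q π = 2 * (∑ y, q y * Real.log (q y / r y)) + 2 * Bhat μ π := by
    intro q hq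
    have hpt : ∀ y, q y * Real.log (q y / μ y) + q y * Real.log (q y / π y)
        = 2 * (q y * Real.log (q y / r y)) + 2 * (- Real.log Z) * q y := by
      intro y
      rcases eq_or_lt_of_le (hq.1 y) with h0 | hpos
      · rw [← h0]; ring
      · have hsμ : 0 < Real.sqrt (μ y) := Real.sqrt_pos.2 (hμf y)
        have hsπ : 0 < Real.sqrt (π y) := Real.sqrt_pos.2 (hπf y)
        have hlμ : Real.log (μ y) = 2 * Real.log (Real.sqrt (μ y)) := by
          rw [Real.log_sqrt (hμf y).le]; ring
        have hlπ : Real.log (π y) = 2 * Real.log (Real.sqrt (π y)) := by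
          rw [Real.log_sqrt (hπf y).le]; ring
        rw [Real.log_div hpos.ne' (hμf y).ne', Real.log_div hpos.ne' (hπf y).ne',
          Real.log_div hpos.ne' (hrpos y).ne', hrdef]
        simp only
        rw [Real.log_div (mul_pos hsμ hsπ).ne' hZpos.ne', Real.log_mul hsμ.ne' hsπ.ne',
          hlμ, hlπ]
        ring
    unfold KL
    rw [← Finset.sum_add_distrib, Finset.sum_congr rfl (fun y _ => hpt y),
      Finset.sum_add_distrib, ← Finset.mul_sum, ← Finset.mul_sum,
      hq.2, hBhat]
    ring
  -- lower bound for single distributions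
  have lbound : ∀ q : 𝓨 → ℝ, IsProb q → 2 * Bhat μ π ≤ KL q μ + KL q π := by
    intro q hq
    have hg := gibbs q r hq hrpos hr1
    rw [keyeq q hq]
    linarith
  constructor
  · -- membership with q₁ = q₂ = r
    refine ⟨r, r, hrprob, hrprob, le_of_eq (by ring), ?_⟩
    have h0 : ∑ y, r y * Real.log (r y / r y) = 0 := by
      apply Finset.sum_eq_zero
      intro y _
      rw [div_self (hrpos y).ne', Real.log_one, mul_zero]
    have hke := keyeq r hrprob
    rw [h0] at hke
    linarith
  · rintro x ⟨q₁, q₂, hq₁, hq₂, hcon, rfl⟩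
    have h1 := lbound q₁ hq₁
    have h2 := lbound q₂ hq₂
    linarith
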